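/- Fix ε ∈ (0, 1/2) and let A ∈ {±1}^{m×n}. Suppose there exist vectors v_1,...,v_n ∈ R^d and finitely supported distributions η_1,...,η_m over R^d with Pr_{u∼η_i}[sign⟨u, v_j⟩ ≠ A_{i,j}] ≤ ε for all i, j. Then for any odd integer k with n·exp(−2k(1/2−ε)²) < 1, for every row i there exist vectors u_{i,1},...,u_{i,k} ∈ R^d such that A_{i,j} = Majority(sign⟨u_{i,1}, v_j⟩, ..., sign⟨u_{i,k}, v_j⟩) for all j ∈ [n]. -/

import Mathlib

open scoped RealInnerProductSpace
open scoped Classical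

noncomputable def Rsign (x : ℝ) : ℝ := if 0 < x then 1 else -1

lemma Rsign_cases (x : ℝ) : Rsign x = 1 ∨ Rsign x = -1 := by
  unfold Rsign; split <;> simp

lemma numeric (ε : ℝ) (hε0 : 0 < ε) (hε : ε < 1/2) :
    2 * (1 - ε) ≤ Real.sqrt ((1 - ε) / ε) * Real.exp (-2 * (1/2 - ε)^2) := by
  have h1ε : (0:ℝ) < 1 - ε := by linarith
  have hs : (0:ℝ) ≤ (1 - ε) / ε := by positivity
  have key : 4 * ε * (1 - ε) ≤ Real.exp (-(4 * (1/2 - ε)^2)) := by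
    have h := Real.add_one_le_exp (-(4 * (1/2 - ε)^2))
    nlinarith [h]
  have h2 : (Real.sqrt ((1-ε)/ε))^2 = (1-ε)/ε := Real.sq_sqrt hs
  have h3 : (Real.exp (-2 * (1/2-ε)^2))^2 = Real.exp (-(4 * (1/2 - ε)^2)) := by
    rw [pow_two, ← Real.exp_add]; ring_nf
  have hsq : (2 * (1 - ε))^2 ≤ (Real.sqrt ((1-ε)/ε) * Real.exp (-2 * (1/2-ε)^2))^2 := by
    rw [mul_pow, mul_pow, h2, h3]
    rw [div_mul_eq_mul_div, le_div_iff₀ hε0]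
    nlinarith [key]
  have hL : (0:ℝ) ≤ 2 * (1 - ε) := by linarith
  have hR : (0:ℝ) ≤ Real.sqrt ((1-ε)/ε) * Real.exp (-2 * (1/2-ε)^2) := by positivity
  calc 2 * (1 - ε) = Real.sqrt ((2 * (1 - ε))^2) := by rw [Real.sqrt_sq hL]
  _ ≤ Real.sqrt ((Real.sqrt ((1-ε)/ε) * Real.exp (-2 * (1/2-ε)^2))^2) := Real.sqrt_le_sqrt hsq
  _ = _ := Real.sqrt_sq hR

theorem stmt13 (m n d k : ℕ) (ε : ℝ) (hε0 : 0 < ε) (hε : ε < 1 / 2)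
    (hk : Odd k) (hkn : (n : ℝ) * Real.exp (-2 * k * (1 / 2 - ε) ^ 2) < 1)
    (A : Matrix (Fin m) (Fin n) ℝ) (hA : ∀ i j, A i j = 1 ∨ A i j = -1)
    (v : Fin n → EuclideanSpace ℝ (Fin d))
    (S : Fin m → Finset (EuclideanSpace ℝ (Fin d)))
    (p : Fin m → EuclideanSpace ℝ (Fin d) → ℝ)
    (hp0 : ∀ i w, 0 ≤ p i w) (hp1 : ∀ i, ∑ w ∈ S i, p i w = 1)
    (herr : ∀ i j, ∑ w ∈ (S i).filter (fun w => Rsign ⟪w, v j⟫ ≠ A i j), p i w ≤ ε) :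
    ∀ i, ∃ u : Fin k → EuclideanSpace ℝ (Fin d), ∀ j,
      A i j = if (k : ℝ) < 2 * ((Finset.univ.filter
          fun l => Rsign ⟪u l, v j⟫ = 1).card : ℝ) then 1 else -1 := by
  intro i
  have h1ε : (0:ℝ) < 1 - ε := by linarith
  set fc : Fin n → (Fin k → EuclideanSpace ℝ (Fin d)) → ℕ :=
    fun j u => (Finset.univ.filter fun l => Rsign ⟪u l, v j⟫ ≠ A i j).card with hfc
  set T : Finset (Fin k → EuclideanSpace ℝ (Fin d)) :=
    Fintype.piFinset (fun _ => S i) with hT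
  set μ : (Fin k → EuclideanSpace ℝ (Fin d)) → ℝ := fun u => ∏ l, p i (u l) with hμ
  have hμ0 : ∀ u, 0 ≤ μ u := fun u => Finset.prod_nonneg (fun l _ => hp0 i (u l))
  have hTsum : ∑ u ∈ T, μ u = 1 := by
    rw [hT, hμ, ← Finset.prod_univ_sum]
    simp [hp1 i]
  set lam : ℝ := (1 - ε) / ε with hlam
  set σ : ℝ := Real.sqrt lam with hσ
  have hlam1 : (1:ℝ) ≤ lam := by rw [hlam, le_div_iff₀ hε0]; linarith
  have hσ1 : 1 ≤ σ := by
    calc (1:ℝ) = Real.sqrt 1 := Real.sqrt_one.symm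
    _ ≤ σ := Real.sqrt_le_sqrt hlam1
  have hσ0 : (0:ℝ) < σ := lt_of_lt_of_le one_pos hσ1
  have hσsq : σ^2 = lam := Real.sq_sqrt (by positivity)
  have hlam0 : (0:ℝ) ≤ lam := by linarith
  have key : ∀ j, ∑ u ∈ T.filter (fun u => k ≤ 2 * fc j u), μ u
      ≤ Real.exp (-2 * k * (1/2 - ε)^2) := by
    intro j
    set q : ℝ := ∑ w ∈ (S i).filter (fun w => Rsign ⟪w, v j⟫ ≠ A i j), p i w with hq
    have hqε : q ≤ ε := herr i j
    have step1 : σ^k * ∑ u ∈ T.filter (fun u => k ≤ 2 * fc j u), μ u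
        ≤ ∑ u ∈ T, μ u * lam ^ (fc j u) := by
      rw [Finset.mul_sum]
      refine le_trans (Finset.sum_le_sum ?_)
        (Finset.sum_le_sum_of_subset_of_nonneg (Finset.filter_subset _ _) ?_)
      · intro u hu
        rw [Finset.mem_filter] at hu
        have h2 : σ^k ≤ lam ^ (fc j u) := by
          rw [← hσsq, ← pow_mul]
          exact pow_le_pow_right₀ hσ1 hu.2
        calc σ^k * μ u = μ u * σ^k := mul_comm _ _
        _ ≤ μ u * lam ^ (fc j u) := mul_le_mul_of_nonneg_left h2 (hμ0 u)
      · intro u _ _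
        have := hμ0 u
        positivity
    have step2 : ∑ u ∈ T, μ u * lam ^ (fc j u)
        = ∏ _l : Fin k, ∑ w ∈ S i,
            p i w * lam ^ (if Rsign ⟪w, v j⟫ ≠ A i j then 1 else 0) := by
      rw [Finset.prod_univ_sum]
      refine Finset.sum_congr rfl fun u _ => ?_
      simp only [hμ, hfc]
      rw [Finset.card_filter, ← Finset.prod_pow_eq_pow_sum, ← Finset.prod_mul_distrib]
    have factor_eq : ∀ _l : Fin k, ∑ w ∈ S i,
        p i w * lam ^ (if Rsign ⟪w, v j⟫ ≠ A i j then 1 else 0)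
        = q * lam + (1 - q) := by
      intro _l
      rw [← Finset.sum_filter_add_sum_filter_not (S i)
        (fun w => Rsign ⟪w, v j⟫ ≠ A i j)]
      have e1 : ∑ w ∈ (S i).filter (fun w => Rsign ⟪w, v j⟫ ≠ A i j),
          p i w * lam ^ (if Rsign ⟪w, v j⟫ ≠ A i j then 1 else 0) = q * lam := by
        rw [hq, Finset.sum_mul]
        refine Finset.sum_congr rfl fun w hw => ?_
        rw [Finset.mem_filter] at hw
        rw [if_pos hw.2, pow_one]
      have e2 : ∑ w ∈ (S i).filter (fun w => ¬ Rsign ⟪w, v j⟫ ≠ A i j),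
          p i w * lam ^ (if Rsign ⟪w, v j⟫ ≠ A i j then 1 else 0)
          = 1 - q := by
        have e3 : ∑ w ∈ (S i).filter (fun w => ¬ Rsign ⟪w, v j⟫ ≠ A i j),
            p i w * lam ^ (if Rsign ⟪w, v j⟫ ≠ A i j then 1 else 0)
            = ∑ w ∈ (S i).filter (fun w => ¬ Rsign ⟪w, v j⟫ ≠ A i j), p i w := by
          refine Finset.sum_congr rfl fun w hw => ?_
          rw [Finset.mem_filter] at hw
          rw [if_neg hw.2, pow_zero, mul_one]
        rw [e3, hq]
        have := Finset.sum_filter_add_sum_filter_not (S i)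
          (fun w => Rsign ⟪w, v j⟫ ≠ A i j) (p i)
        linarith [hp1 i, this]
      rw [e1, e2]
    have factor_le : q * lam + (1 - q) ≤ 2 * (1 - ε) := by
      have hεlam : ε * lam = 1 - ε := by rw [hlam]; field_simp
      nlinarith [hqε, hε0, hε, hlam1]
    have factor_nonneg : (0:ℝ) ≤ q * lam + (1 - q) := by
      have hq0 : 0 ≤ q := Finset.sum_nonneg fun w _ => hp0 i w
      nlinarith [hqε, hε]
    have step3 : ∑ u ∈ T, μ u * lam ^ (fc j u) ≤ (2 * (1 - ε))^k := by
      rw [step2]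
      calc ∏ _l : Fin k, ∑ w ∈ S i,
          p i w * lam ^ (if Rsign ⟪w, v j⟫ ≠ A i j then 1 else 0)
          = ∏ _l : Fin k, (q * lam + (1 - q)) :=
            Finset.prod_congr rfl fun l _ => factor_eq l
      _ ≤ ∏ _l : Fin k, (2 * (1 - ε)) := by
            refine Finset.prod_le_prod (fun _ _ => factor_nonneg) (fun _ _ => factor_le)
      _ = (2 * (1 - ε))^k := by rw [Finset.prod_const, Finset.card_univ, Fintype.card_fin]
    have hnum := numeric ε hε0 hε
    have step4 : (2 * (1 - ε))^k ≤ σ^k * (Real.exp (-2 * (1/2 - ε)^2))^k := by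
      rw [← mul_pow]
      exact pow_le_pow_left₀ (by linarith) hnum k
    have hexp : (Real.exp (-2 * (1/2 - ε)^2))^k = Real.exp (-2 * k * (1/2 - ε)^2) := by
      rw [← Real.exp_nat_mul]
      ring_nf
    have : σ^k * ∑ u ∈ T.filter (fun u => k ≤ 2 * fc j u), μ u
        ≤ σ^k * Real.exp (-2 * k * (1/2 - ε)^2) := by
      rw [← hexp]
      calc σ^k * ∑ u ∈ T.filter (fun u => k ≤ 2 * fc j u), μ u
          ≤ ∑ u ∈ T, μ u * lam ^ (fc j u) := step1
      _ ≤ (2 * (1 - ε))^k := step3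
      _ ≤ σ^k * (Real.exp (-2 * (1/2 - ε)^2))^k := step4
    exact le_of_mul_le_mul_left this (by positivity)
  obtain ⟨u, huT, hu⟩ : ∃ u ∈ T, ∀ j, 2 * fc j u < k := by
    by_contra hcon
    push_neg at hcon
    have h1 : (1:ℝ) ≤ ∑ j : Fin n, ∑ u ∈ T.filter (fun u => k ≤ 2 * fc j u), μ u := by
      rw [← hTsum]
      calc ∑ u ∈ T, μ u
          ≤ ∑ u ∈ T, ∑ j : Fin n, if k ≤ 2 * fc j u then μ u else 0 := by
            refine Finset.sum_le_sum fun u hu => ?_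
            obtain ⟨j, hj⟩ := hcon u hu
            calc μ u = if k ≤ 2 * fc j u then μ u else 0 := by rw [if_pos hj]
            _ ≤ ∑ j' : Fin n, if k ≤ 2 * fc j' u then μ u else 0 := by
                  refine Finset.single_le_sum (f := fun j' => if k ≤ 2 * fc j' u then μ u else 0) (fun j' _ => ?_) (Finset.mem_univ j)
                  split
                  · exact hμ0 u
                  · exact le_refl 0
      _ = ∑ j : Fin n, ∑ u ∈ T.filter (fun u => k ≤ 2 * fc j u), μ u := by
            rw [Finset.sum_comm]
            exact Finset.sum_congr rfl fun j _ => (Finset.sum_filter _ _).symm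
    have h2 : ∑ j : Fin n, ∑ u ∈ T.filter (fun u => k ≤ 2 * fc j u), μ u
        ≤ (n : ℝ) * Real.exp (-2 * k * (1/2 - ε)^2) := by
      calc ∑ j : Fin n, ∑ u ∈ T.filter (fun u => k ≤ 2 * fc j u), μ u
          ≤ ∑ _j : Fin n, Real.exp (-2 * k * (1/2 - ε)^2) :=
            Finset.sum_le_sum fun j _ => key j
      _ = (n : ℝ) * Real.exp (-2 * k * (1/2 - ε)^2) := by
            rw [Finset.sum_const, Finset.card_univ, Fintype.card_fin, nsmul_eq_mul]
    linarith
  refine ⟨u, fun j => ?_⟩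
  have hmaj := hu j
  rcases hA i j with hA1 | hA1
  · -- A i j = 1 : sign ≠ A ↔ ¬(sign = 1)
    have hcard : (Finset.univ.filter fun l => Rsign ⟪u l, v j⟫ = 1).card + fc j u = k := by
      simp only [hfc]
      have : (Finset.univ.filter fun l : Fin k => Rsign ⟪u l, v j⟫ ≠ A i j)
          = Finset.univ.filter fun l : Fin k => ¬ Rsign ⟪u l, v j⟫ = 1 := by
        refine Finset.filter_congr fun l _ => ?_
        rw [hA1]
      rw [this, Finset.card_filter_add_card_filter_not, Finset.card_univ,
        Fintype.card_fin]
    have hgt : k < 2 * (Finset.univ.filter fun l => Rsign ⟪u l, v j⟫ = 1).card := by omega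
    rw [hA1, if_pos (by exact_mod_cast hgt)]
  · -- A i j = -1 : sign ≠ A ↔ sign = 1
    have hcard : (Finset.univ.filter fun l => Rsign ⟪u l, v j⟫ = 1).card = fc j u := by
      simp only [hfc]
      refine congrArg Finset.card (Finset.filter_congr fun l _ => ?_)
      rw [hA1]
      rcases Rsign_cases ⟪u l, v j⟫ with h | h <;> rw [h] <;> norm_num
    have hlt : ¬ (k < 2 * (Finset.univ.filter fun l => Rsign ⟪u l, v j⟫ = 1).card) := by
      omega
    rw [hA1, if_neg (by exact_mod_cast hlt)]
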